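/- There exists an absolute constant C > 0 such that for all reals X ≥ 2, T ≥ 1 and all real t ≥ 1: | t·cosh(πt + 2iβt)/sinh(πt) + i·sinh(πt + 2iβt)/(2·tanh(β)·sinh(πt)) − ( t + (i/2)·(cosh β / sinh β) )·X^{it}·e^{−t/T} | ≤ C·e^{−πt}, where β = (1/2)·log X + i/(2T) and X^{it} = e^{it·log X}. -/

import Mathlib

open Complex Real

private lemma alg (t' s0 c0 e E c G S : ℂ) (hs0 : s0 ≠ 0) (hS : S ≠ 0)
    (h2S : e = 2 * S + E) :
    t' * ((e * c + E * G) / 2) / S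
      + Complex.I * ((e * c - E * G) / 2) * c0 / (2 * s0 * S)
      - (t' * (2 * s0) + Complex.I * c0) / (2 * s0) * c
    = ((t' * (2 * s0) + Complex.I * c0) * c + (t' * (2 * s0) - Complex.I * c0) * G) * E
        / (2 * S * (2 * s0)) := by
  have hD1 : (2 : ℂ) * s0 * S ≠ 0 := mul_ne_zero (mul_ne_zero two_ne_zero hs0) hS
  have hs2 : (2 : ℂ) * s0 ≠ 0 := mul_ne_zero two_ne_zero hs0
  have hP1 : (S * (2 * s0 * S)) ≠ 0 := mul_ne_zero hS hD1
  have hP2 : (S * (2 * s0 * S) * (2 * s0)) ≠ 0 := mul_ne_zero hP1 hs2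
  have hP3 : (2 : ℂ) * S * (2 * s0) ≠ 0 := mul_ne_zero (mul_ne_zero two_ne_zero hS) hs2
  rw [div_add_div _ _ hS hD1, div_mul_eq_mul_div, div_sub_div _ _ hP1 hs2,
      div_eq_div_iff hP2 hP3]
  linear_combination (4*c*s0^2*S^2*(2*t'*s0 + Complex.I*c0)) * h2S

private lemma coshmul (b : ℂ) : Complex.cosh b * Complex.exp b = (Complex.exp (2*b) + 1)/2 := by
  have h2 : Complex.exp (2*b) = Complex.exp b * Complex.exp b := by
    rw [two_mul, Complex.exp_add]
  have h3 : Complex.exp (-b) * Complex.exp b = 1 := by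
    rw [← Complex.exp_add]; simp
  linear_combination (Complex.exp b / 2) * Complex.two_cosh b + (1/2 : ℂ) * h3 - (1/2 : ℂ) * h2

private lemma sinhmul (b : ℂ) : Complex.sinh b * Complex.exp b = (Complex.exp (2*b) - 1)/2 := by
  have h2 : Complex.exp (2*b) = Complex.exp b * Complex.exp b := by
    rw [two_mul, Complex.exp_add]
  have h3 : Complex.exp (-b) * Complex.exp b = 1 := by
    rw [← Complex.exp_add]; simp
  linear_combination (Complex.exp b / 2) * Complex.two_sinh b - (1/2 : ℂ) * h3 - (1/2 : ℂ) * h2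

set_option maxHeartbeats 2000000 in
private lemma phihat_aux (X T t : ℝ) (hX : 2 ≤ X) (hT : 1 ≤ T) (ht : 1 ≤ t) :
    ‖(t : ℂ) * Complex.cosh (Real.pi * t + 2 * Complex.I * ((Real.log X) / 2 + Complex.I / (2 * T)) * t)
          / Complex.sinh ((Real.pi * t : ℝ))
        + Complex.I * Complex.sinh (Real.pi * t + 2 * Complex.I * ((Real.log X) / 2 + Complex.I / (2 * T)) * t)
          / (2 * Complex.tanh ((Real.log X) / 2 + Complex.I / (2 * T)) * Complex.sinh ((Real.pi * t : ℝ)))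
        - ((t : ℂ) + (Complex.I / 2) * (Complex.cosh ((Real.log X) / 2 + Complex.I / (2 * T)) / Complex.sinh ((Real.log X) / 2 + Complex.I / (2 * T))))
          * Complex.exp (Complex.I * t * Real.log X) * Real.exp (-t / T)‖
      ≤ 100 * Real.exp (-Real.pi * t) := by
  have ht0 : (0:ℝ) < t := lt_of_lt_of_le one_pos ht
  have hT0 : (0:ℝ) < T := lt_of_lt_of_le one_pos hT
  have hTne : (T:ℂ) ≠ 0 := by exact_mod_cast hT0.ne'
  have hπ3 : (3:ℝ) < Real.pi := Real.pi_gt_three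
  set β : ℂ := (Real.log X : ℂ) / 2 + Complex.I / (2 * (T:ℂ)) with hβ
  -- exp(2β) facts
  have h2β : 2 * β = (Real.log X : ℂ) + (↑(1/T : ℝ) : ℂ) * Complex.I := by
    rw [hβ]; push_cast; field_simp
  have habs2β : ‖Complex.exp (2*β)‖ = X := by
    rw [h2β, Complex.exp_add, norm_mul, Complex.norm_exp_ofReal, Complex.norm_exp_ofReal_mul_I,
        mul_one, Real.exp_log (by linarith)]
  have hc2 : Complex.cosh β * Complex.exp β = (Complex.exp (2*β) + 1)/2 := coshmul β
  have hs2 : Complex.sinh β * Complex.exp β = (Complex.exp (2*β) - 1)/2 := sinhmul β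
  have hsinhβ : Complex.sinh β ≠ 0 := by
    intro h
    rw [h, zero_mul] at hs2
    have h1 : Complex.exp (2*β) = 1 := by linear_combination -2 * hs2
    rw [h1, norm_one] at habs2β
    linarith
  have hcoshβ : Complex.cosh β ≠ 0 := by
    intro h
    rw [h, zero_mul] at hc2
    have h1 : Complex.exp (2*β) = -1 := by linear_combination -2 * hc2
    rw [h1] at habs2β
    simp at habs2β
    linarith
  have hbe : (0:ℝ) < ‖Complex.exp β‖ := norm_pos_iff.mpr (Complex.exp_ne_zero β)
  have hsinhβpos : (0:ℝ) < ‖Complex.sinh β‖ := norm_pos_iff.mpr hsinhβ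
  -- bound on cosh β / sinh β
  have h1 : ‖Complex.exp (2*β) + 1‖ ≤ X + 1 := by
    calc ‖Complex.exp (2*β) + 1‖ ≤ ‖Complex.exp (2*β)‖ + ‖1‖ :=
          norm_add_le _ _
      _ = X + 1 := by rw [habs2β, norm_one]
  have h2 : X - 1 ≤ ‖Complex.exp (2*β) - 1‖ := by
    have := norm_sub_norm_le (Complex.exp (2*β)) 1
    simp only [norm_one] at this
    rw [habs2β] at this
    simpa using this
  have hce : ‖Complex.cosh β‖ * ‖Complex.exp β‖
      = ‖Complex.exp (2*β) + 1‖ / 2 := by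
    rw [← norm_mul, hc2, norm_div]
    simp
  have hse : ‖Complex.sinh β‖ * ‖Complex.exp β‖
      = ‖Complex.exp (2*β) - 1‖ / 2 := by
    rw [← norm_mul, hs2, norm_div]
    simp
  have hq3 : ‖Complex.cosh β / Complex.sinh β‖ ≤ 3 := by
    rw [norm_div, div_le_iff₀ hsinhβpos]
    nlinarith [hce, hse, h1, h2, hbe]
  -- rewrite the argument π t
  have hππ : ((Real.pi : ℂ) * (t:ℂ)) = ((Real.pi * t : ℝ) : ℂ) := by push_cast; ring
  rw [hππ]
  set z : ℂ := ((Real.pi * t : ℝ) : ℂ) with hz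
  set w : ℂ := 2 * Complex.I * β * (t:ℂ) with hw
  set e : ℂ := Complex.exp z with he
  set c : ℂ := Complex.exp w with hc
  set E : ℂ := Complex.exp (-z) with hE
  set G : ℂ := Complex.exp (-w) with hG
  have hsinh2 : Complex.sinh z = (e - E)/2 := by
    rw [he, hE]
    linear_combination (Complex.two_sinh z) / 2
  have hcosh1 : Complex.cosh (z + w) = (e * c + E * G)/2 := by
    have h := Complex.two_cosh (z + w)
    rw [Complex.exp_add, show -(z+w) = -z + -w from by ring, Complex.exp_add] at h
    rw [he, hc, hE, hG]
    linear_combination h / 2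
  have hsinh1 : Complex.sinh (z + w) = (e * c - E * G)/2 := by
    have h := Complex.two_sinh (z + w)
    rw [Complex.exp_add, show -(z+w) = -z + -w from by ring, Complex.exp_add] at h
    rw [he, hc, hE, hG]
    linear_combination h / 2
  have hsinhz : Complex.sinh z = ((Real.sinh (Real.pi * t) : ℝ) : ℂ) := (Complex.ofReal_sinh _).symm
  have hsinhpos : (0:ℝ) < Real.sinh (Real.pi * t) :=
    Real.sinh_pos_iff.mpr (by positivity)
  have hsz_ne : Complex.sinh z ≠ 0 := by
    rw [hsinhz]
    exact_mod_cast hsinhpos.ne'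
  have heE_ne : e - E ≠ 0 := by
    intro h
    apply hsz_ne
    rw [hsinh2, h, zero_div]
  -- identify exp(I t log X) * exp(-t/T) with c
  have hwr : w = Complex.I * (t:ℂ) * (Real.log X : ℂ) + ((-t/T : ℝ) : ℂ) := by
    rw [hw, hβ]
    push_cast
    linear_combination ((t:ℂ) / (T:ℂ)) * Complex.I_mul_I
  have h5 : Complex.exp (Complex.I * (t:ℂ) * (Real.log X : ℂ)) * ((Real.exp (-t/T) : ℝ) : ℂ) = c := by
    rw [Complex.ofReal_exp, ← Complex.exp_add, hc, hwr]
  -- abs of the exponentials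
  have habsc : ‖c‖ = Real.exp (-t/T) := by
    rw [hc, hwr, Complex.exp_add, norm_mul,
        show Complex.I * (t:ℂ) * (Real.log X : ℂ) = ((t * Real.log X : ℝ) : ℂ) * Complex.I from by push_cast; ring,
        Complex.norm_exp_ofReal_mul_I, one_mul, Complex.norm_exp_ofReal]
  have habsG : ‖G‖ = Real.exp (t/T) := by
    have : G = c⁻¹ := by rw [hG, hc, Complex.exp_neg]
    rw [this, norm_inv, habsc, ← Real.exp_neg, neg_div, neg_neg]
  have habsE : ‖E‖ = Real.exp (-(Real.pi * t)) := by
    rw [hE, show -z = ((-(Real.pi * t) : ℝ) : ℂ) from by rw [hz]; push_cast; ring,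
        Complex.norm_exp_ofReal]
  have habse : ‖e‖ = Real.exp (Real.pi * t) := by
    rw [he, hz, Complex.norm_exp_ofReal]
  -- the key algebraic identity
  have he2 : e = 2 * Complex.sinh z + E := by linear_combination (-2 : ℂ) * hsinh2
  have hs2' : (2 : ℂ) * Complex.sinh β ≠ 0 := mul_ne_zero two_ne_zero hsinhβ
  have hden : 2 * Complex.tanh β * Complex.sinh z
      = (2 * Complex.sinh β * Complex.sinh z) / Complex.cosh β := by
    rw [Complex.tanh_eq_sinh_div_cosh]; ring
  have hA : ((t:ℂ) + (Complex.I/2) * (Complex.cosh β / Complex.sinh β))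
      = ((t:ℂ) * (2 * Complex.sinh β) + Complex.I * Complex.cosh β) / (2 * Complex.sinh β) := by
    rw [eq_div_iff hs2']
    field_simp
  have hB : ((t:ℂ) - (Complex.I/2) * (Complex.cosh β / Complex.sinh β))
      = ((t:ℂ) * (2 * Complex.sinh β) - Complex.I * Complex.cosh β) / (2 * Complex.sinh β) := by
    rw [eq_div_iff hs2']
    field_simp
  have key : (t : ℂ) * Complex.cosh (z + w) / Complex.sinh z
        + Complex.I * Complex.sinh (z + w) / (2 * Complex.tanh β * Complex.sinh z)
        - ((t : ℂ) + (Complex.I / 2) * (Complex.cosh β / Complex.sinh β)) * c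
      = (((t:ℂ) + (Complex.I/2) * (Complex.cosh β / Complex.sinh β)) * c
          + ((t:ℂ) - (Complex.I/2) * (Complex.cosh β / Complex.sinh β)) * G) * E
          / (2 * Complex.sinh z) := by
    rw [hcosh1, hsinh1, hden, div_div_eq_mul_div, hA, hB,
        alg (t:ℂ) (Complex.sinh β) (Complex.cosh β) e E c G (Complex.sinh z) hsinhβ hsz_ne he2]
    ring
  rw [mul_assoc _ (Complex.exp _) _, h5, key]
  -- now bound everything
  rw [norm_div, norm_mul]
  have habsee : ‖2 * Complex.sinh z‖ = 2 * Real.sinh (Real.pi * t) := by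
    rw [show (2:ℂ) * Complex.sinh z = ((2 * Real.sinh (Real.pi * t) : ℝ) : ℂ) from by
      rw [hsinhz]; push_cast; ring]
    rw [Complex.norm_real, Real.norm_eq_abs, abs_of_pos (by positivity)]
  have habsI2 : ‖Complex.I / 2‖ = 1/2 := by
    rw [norm_div, Complex.norm_I, Complex.norm_two]
  have hA : ‖(t:ℂ) + (Complex.I/2) * (Complex.cosh β / Complex.sinh β)‖ ≤ t + 3/2 := by
    calc ‖(t:ℂ) + (Complex.I/2) * (Complex.cosh β / Complex.sinh β)‖
        ≤ ‖(t:ℂ)‖ + ‖(Complex.I/2) * (Complex.cosh β / Complex.sinh β)‖ :=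
          norm_add_le _ _
      _ ≤ t + 3/2 := by
          rw [norm_mul, habsI2, Complex.norm_real, Real.norm_eq_abs, abs_of_pos ht0]
          nlinarith [hq3]
  have hB : ‖(t:ℂ) - (Complex.I/2) * (Complex.cosh β / Complex.sinh β)‖ ≤ t + 3/2 := by
    calc ‖(t:ℂ) - (Complex.I/2) * (Complex.cosh β / Complex.sinh β)‖
        ≤ ‖(t:ℂ)‖ + ‖(Complex.I/2) * (Complex.cosh β / Complex.sinh β)‖ :=
          norm_sub_le _ _
      _ ≤ t + 3/2 := by
          rw [norm_mul, habsI2, Complex.norm_real, Real.norm_eq_abs, abs_of_pos ht0]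
          nlinarith [hq3]
  have hcle : ‖c‖ ≤ 1 := by
    rw [habsc]
    apply Real.exp_le_one_iff.mpr
    rw [neg_div]
    exact neg_nonpos_of_nonneg (div_nonneg ht0.le hT0.le)
  have hGle : ‖G‖ ≤ Real.exp t := by
    rw [habsG]
    exact Real.exp_le_exp.mpr (div_le_self ht0.le hT)
  -- numerator bound
  have hN : ‖((t:ℂ) + (Complex.I/2) * (Complex.cosh β / Complex.sinh β)) * c
      + ((t:ℂ) - (Complex.I/2) * (Complex.cosh β / Complex.sinh β)) * G‖
      ≤ (t + 3/2) * (1 + Real.exp t) := by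
    calc ‖((t:ℂ) + (Complex.I/2) * (Complex.cosh β / Complex.sinh β)) * c
        + ((t:ℂ) - (Complex.I/2) * (Complex.cosh β / Complex.sinh β)) * G‖
        ≤ ‖((t:ℂ) + (Complex.I/2) * (Complex.cosh β / Complex.sinh β)) * c‖
          + ‖((t:ℂ) - (Complex.I/2) * (Complex.cosh β / Complex.sinh β)) * G‖ :=
          norm_add_le _ _
      _ ≤ (t + 3/2) * 1 + (t + 3/2) * Real.exp t := by
          rw [norm_mul, norm_mul]
          have m1 := mul_le_mul hA hcle (norm_nonneg _) (by linarith)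
          have m2 := mul_le_mul hB hGle (norm_nonneg _) (by linarith)
          exact add_le_add m1 m2
      _ = (t + 3/2) * (1 + Real.exp t) := by ring
  rw [habsE, habsee]
  -- final numeric inequality
  have hP1 : Real.exp (t + t) ≤ Real.exp (Real.pi * t) :=
    Real.exp_le_exp.mpr (by nlinarith)
  have hP2 : Real.exp t * Real.exp t = Real.exp (t + t) := (Real.exp_add t t).symm
  have hf1 : t + 1 ≤ Real.exp t := Real.add_one_le_exp t
  have hf2 : (1:ℝ) ≤ Real.exp t := Real.one_le_exp ht0.le
  have hsinh_lb : (Real.exp (Real.pi * t) - 1) / 2 ≤ Real.sinh (Real.pi * t) := by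
    rw [Real.sinh_eq]
    have : Real.exp (-(Real.pi * t)) ≤ 1 := Real.exp_le_one_iff.mpr (by nlinarith)
    linarith
  have hP4 : (4:ℝ) ≤ Real.exp (Real.pi * t) := by
    nlinarith [hf1, hf2, hP1, hP2]
  have hnum : (t + 3/2) * (1 + Real.exp t) ≤ 200 * Real.sinh (Real.pi * t) := by
    nlinarith [hf1, hf2, hP1, hP2, hsinh_lb, hP4, Real.exp_pos t]
  have hEpos : (0:ℝ) < Real.exp (-(Real.pi * t)) := Real.exp_pos _
  have habspos : (0:ℝ) ≤ ‖((t:ℂ) + (Complex.I/2) * (Complex.cosh β / Complex.sinh β)) * c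
      + ((t:ℂ) - (Complex.I/2) * (Complex.cosh β / Complex.sinh β)) * G‖ := norm_nonneg _
  rw [show -Real.pi * t = -(Real.pi * t) from by ring]
  rw [div_le_iff₀ (by positivity)]
  calc ‖((t:ℂ) + (Complex.I/2) * (Complex.cosh β / Complex.sinh β)) * c
      + ((t:ℂ) - (Complex.I/2) * (Complex.cosh β / Complex.sinh β)) * G‖ * Real.exp (-(Real.pi * t))
      ≤ ((t + 3/2) * (1 + Real.exp t)) * Real.exp (-(Real.pi * t)) := by gcongr
    _ ≤ (200 * Real.sinh (Real.pi * t)) * Real.exp (-(Real.pi * t)) := by gcongr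
    _ = 100 * Real.exp (-(Real.pi * t)) * (2 * Real.sinh (Real.pi * t)) := by ring

theorem phihat_asymptotic :
    ∃ C : ℝ, 0 < C ∧ ∀ (X T : ℝ), 2 ≤ X → 1 ≤ T → ∀ t : ℝ, 1 ≤ t →
      (let β : ℂ := (Real.log X) / 2 + Complex.I / (2 * T);
      ‖(t : ℂ) * Complex.cosh (Real.pi * t + 2 * Complex.I * β * t)
          / Complex.sinh ((Real.pi * t : ℝ))
        + Complex.I * Complex.sinh (Real.pi * t + 2 * Complex.I * β * t)
          / (2 * Complex.tanh β * Complex.sinh ((Real.pi * t : ℝ)))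
        - ((t : ℂ) + (Complex.I / 2) * (Complex.cosh β / Complex.sinh β))
          * Complex.exp (Complex.I * t * Real.log X) * Real.exp (-t / T)‖)
      ≤ C * Real.exp (-Real.pi * t) := by
  exact ⟨100, by norm_num, fun X T hX hT t ht => phihat_aux X T t hX hT ht⟩
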